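/- Let a protocol-extraction bound be given: a deterministic (r(n), s(n), 1)-bounded Turing machine deciding a language L of padded pointer-jumping instances yields, for each m (with n̂ = 2^{m-1}, n = 2m·n̂ + m + 1, k = r(n)), a deterministic k-round two-party communication protocol for the pointer jumping function pj_{n̂,k+1} with total communication at most r(n)·(c·s(n) + log|Q|) bits. If moreover r(n) ∈ o(n/(log n)²) and r(n)·s(n) ∈ o(n/log n), then for sufficiently large m this communication is o(n̂) while k < n̂/log n̂, contradicting the Ω(n̂) lower bound on the deterministic k-round communication complexity of pj_{n̂,k+1}. Hence PJ_{r+1} ∉ ST(r(n), s(n), 1). -/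

import Mathlib

open Filter Asymptotics

set_option maxHeartbeats 1600000 in
/-- lower bound for padded pointer jumping on one external tape (Lemma 5(b)).
`ST r s 1` is the (abstract) class of languages decided by deterministic
`(r,s,1)`-bounded machines, `PJ` is the language `PJ_{r+1}` of padded pointer-jumping
instances, and `CC n̂ k` is the deterministic `k`-round communication complexity of the
pointer jumping function `pj_{n̂,k+1}`.  Hypotheses: the Nisan–Wigderson lower bound
(`CC n̂ k = Ω(n̂)` whenever `k < n̂ / log n̂`); the protocol extraction (a machine for `PJ`
yields, for each `m` with `n̂ = 2^(m-1)` and `n = 2·m·n̂ + m + 1`, `k = r n`, a `k`-round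
protocol of cost at most `r(n)·(c·s(n) + log|Q|)`); and `r(n) ∈ o(n/(log n)²)`,
`r(n)·s(n) ∈ o(n/log n)`.  Conclusion: `PJ ∉ ST(r, s, 1)`. -/
theorem PJ_not_in_ST_one_tape {Lang : Type*}
    (ST : (ℕ → ℕ) → (ℕ → ℕ) → ℕ → Set Lang) (PJ : Lang)
    (r s : ℕ → ℕ) (CC : ℕ → ℕ → ℝ) (c logQ : ℝ)
    (hlb : ∃ δ : ℝ, 0 < δ ∧ ∀ᶠ nh : ℕ in atTop, ∀ k : ℕ,
      (k : ℝ) < (nh : ℝ) / Real.logb 2 nh → δ * (nh : ℝ) ≤ CC nh k)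
    (hext : PJ ∈ ST r s 1 → ∀ m : ℕ, 1 ≤ m →
      CC (2 ^ (m - 1)) (r (2 * m * 2 ^ (m - 1) + m + 1)) ≤
        (r (2 * m * 2 ^ (m - 1) + m + 1) : ℝ) *
          (c * (s (2 * m * 2 ^ (m - 1) + m + 1) : ℝ) + logQ))
    (ho1 : (fun n : ℕ => (r n : ℝ)) =o[atTop]
      fun n : ℕ => (n : ℝ) / (Real.logb 2 n) ^ 2)
    (ho2 : (fun n : ℕ => (r n : ℝ) * (s n : ℝ)) =o[atTop]
      fun n : ℕ => (n : ℝ) / Real.logb 2 n) :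
    PJ ∉ ST r s 1 := by
  intro hPJ
  obtain ⟨δ, hδ, hlbe⟩ := hlb
  set ε₁ : ℝ := min (1/6) (δ / (6 * (|logQ| + 1))) with hε₁def
  set ε₂ : ℝ := δ / (6 * (|c| + 1)) with hε₂def
  have hε₁ : 0 < ε₁ := lt_min (by norm_num) (by positivity)
  have hε₂ : 0 < ε₂ := by positivity
  have h1 := ho1.def hε₁
  have h2 := ho2.def hε₂
  rw [eventually_atTop] at h1 h2 hlbe
  obtain ⟨N₁, hN₁⟩ := h1
  obtain ⟨N₂, hN₂⟩ := h2
  obtain ⟨N₃, hN₃⟩ := hlbe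
  set m : ℕ := N₁ + N₂ + N₃ + 2 with hmdef
  have hm2 : 2 ≤ m := by omega
  set nh : ℕ := 2 ^ (m - 1) with hnh
  set n : ℕ := 2 * m * nh + m + 1 with hn
  clear_value m nh n
  have hmnh : m ≤ nh := by
    have h := Nat.lt_two_pow_self (n := m - 1)
    omega
  have hmn : m ≤ n := by
    have : 0 ≤ 2 * m * nh := Nat.zero_le _
    omega
  -- real abbreviations
  have hM2 : (2:ℝ) ≤ (m:ℝ) := by exact_mod_cast hm2
  have hMH : (m:ℝ) ≤ (nh:ℝ) := by exact_mod_cast hmnh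
  have hHpos : (0:ℝ) < (nh:ℝ) := by linarith
  have hNn : (n:ℝ) = 2 * m * nh + m + 1 := by rw [hn]; push_cast; ring
  have hNnpos : (0:ℝ) < (n:ℝ) := by nlinarith
  -- logb 2 nh = m - 1
  have hlognh : Real.logb 2 (nh:ℝ) = (m:ℝ) - 1 := by
    have : ((nh:ℝ)) = (2:ℝ) ^ (m - 1) := by rw [hnh]; push_cast; ring
    rw [this, Real.logb_pow, Real.logb_self_eq_one (by norm_num)]
    have : ((m - 1 : ℕ) : ℝ) = (m:ℝ) - 1 := by
      have : 1 ≤ m := by omega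
      push_cast [this]; ring
    rw [this]; ring
  -- logb 2 n ≥ m
  have hpow : (2:ℝ) ^ m = 2 * (nh:ℝ) := by
    have hm1 : m - 1 + 1 = m := by omega
    have : ((nh:ℝ)) = (2:ℝ) ^ (m - 1) := by rw [hnh]; push_cast; ring
    rw [this, ← pow_succ', hm1]
  have h2mn : (2:ℝ) ^ m ≤ (n:ℝ) := by rw [hpow]; nlinarith
  have hL : (m:ℝ) ≤ Real.logb 2 (n:ℝ) := by
    have h0 : (0:ℝ) < (2:ℝ) ^ m := by positivity
    calc (m:ℝ) = Real.logb 2 ((2:ℝ) ^ m) := by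
          rw [Real.logb_pow, Real.logb_self_eq_one (by norm_num)]; ring
      _ ≤ Real.logb 2 (n:ℝ) := Real.logb_le_logb_of_le (by norm_num) h0 h2mn
  set L : ℝ := Real.logb 2 (n:ℝ) with hLdef
  clear_value L
  have hLpos : (0:ℝ) < L := by linarith
  -- n ≤ 3 m nh
  have hNle : (n:ℝ) ≤ 3 * m * nh := by nlinarith
  -- little-o bounds at n
  have hb1 := hN₁ n (le_trans (by omega) hmn)
  have hb2 := hN₂ n (le_trans (by omega) hmn)
  rw [Real.norm_eq_abs, Real.norm_eq_abs, ← hLdef] at hb1 hb2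
  rw [abs_of_nonneg (Nat.cast_nonneg _),
    abs_of_nonneg (div_nonneg (Nat.cast_nonneg n) (sq_nonneg L))] at hb1
  rw [abs_of_nonneg (mul_nonneg (Nat.cast_nonneg _) (Nat.cast_nonneg _)),
    abs_of_nonneg (div_nonneg (Nat.cast_nonneg n) (le_of_lt hLpos))] at hb2
  -- division bounds
  have hdivA : (n:ℝ) / L ^ 2 ≤ 3 * (nh:ℝ) / (m:ℝ) := by
    rw [div_le_div_iff₀ (by positivity) (by linarith)]
    nlinarith [mul_le_mul_of_nonneg_left hL (le_of_lt hLpos),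
      mul_le_mul_of_nonneg_right hL (by linarith : (0:ℝ) ≤ (m:ℝ))]
  have hdivB : (n:ℝ) / L ≤ 3 * (nh:ℝ) := by
    rw [div_le_iff₀ hLpos]
    nlinarith
  -- k bound
  have hk : ((r n : ℕ) : ℝ) < (nh:ℝ) / Real.logb 2 (nh:ℝ) := by
    rw [hlognh]
    have hε₁le : ε₁ ≤ 1/6 := min_le_left _ _
    have e1 : ((r n : ℕ) : ℝ) ≤ (1/6) * (3 * (nh:ℝ) / (m:ℝ)) := by
      calc ((r n : ℕ) : ℝ) ≤ ε₁ * ((n:ℝ) / L ^ 2) := hb1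
        _ ≤ (1/6) * (3 * (nh:ℝ) / (m:ℝ)) :=
            mul_le_mul hε₁le hdivA (div_nonneg (Nat.cast_nonneg n) (sq_nonneg L))
              (by norm_num)
    have e2 : (1/6) * (3 * (nh:ℝ) / (m:ℝ)) < (nh:ℝ) / ((m:ℝ) - 1) := by
      have h : (1/6) * (3 * (nh:ℝ) / (m:ℝ)) = (nh:ℝ) / (2*(m:ℝ)) := by ring
      rw [h, div_lt_div_iff₀ (by linarith) (by linarith)]
      nlinarith
    linarith
  -- lower bound
  have hlow : δ * (nh:ℝ) ≤ CC nh (r n) := hN₃ nh (le_trans (by omega) hmnh) (r n) hk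
  -- upper bound from protocol extraction
  have hcost := hext hPJ m (by omega)
  rw [← hnh] at hcost
  rw [← hn] at hcost
  -- estimate the cost
  have hS : (0:ℝ) ≤ (s n : ℝ) := Nat.cast_nonneg _
  have hR : (0:ℝ) ≤ ((r n : ℕ) : ℝ) := Nat.cast_nonneg _
  have hcost2 : ((r n : ℕ):ℝ) * (c * (s n : ℝ) + logQ)
      ≤ |c| * (((r n : ℕ):ℝ) * (s n : ℝ)) + |logQ| * ((r n : ℕ):ℝ) := by
    have h1' : c * (s n : ℝ) ≤ |c| * (s n : ℝ) :=
      mul_le_mul_of_nonneg_right (le_abs_self c) hS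
    have h2' : logQ ≤ |logQ| := le_abs_self logQ
    nlinarith
  have hA : |c| * ε₂ < δ / 6 := by
    rw [hε₂def, mul_div_assoc']
    rw [div_lt_div_iff₀ (by positivity) (by norm_num)]
    nlinarith [abs_nonneg c]
  have hB : |logQ| * ε₁ ≤ δ / 6 := by
    have : ε₁ ≤ δ / (6 * (|logQ| + 1)) := min_le_right _ _
    have h3 : |logQ| * ε₁ ≤ |logQ| * (δ / (6 * (|logQ| + 1))) :=
      mul_le_mul_of_nonneg_left this (abs_nonneg _)
    have h4 : |logQ| * (δ / (6 * (|logQ| + 1))) ≤ δ / 6 := by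
      rw [mul_div_assoc', div_le_div_iff₀ (by positivity) (by norm_num)]
      nlinarith [abs_nonneg logQ]
    linarith
  have hRSbound : |c| * (((r n : ℕ):ℝ) * (s n : ℝ)) ≤ |c| * (ε₂ * (3 * (nh:ℝ))) := by
    apply mul_le_mul_of_nonneg_left _ (abs_nonneg c)
    calc ((r n : ℕ):ℝ) * (s n : ℝ) ≤ ε₂ * ((n:ℝ) / L) := hb2
      _ ≤ ε₂ * (3 * (nh:ℝ)) := mul_le_mul_of_nonneg_left hdivB (le_of_lt hε₂)
  have hRbound : |logQ| * ((r n : ℕ):ℝ) ≤ |logQ| * (ε₁ * (3 * (nh:ℝ))) := by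
    apply mul_le_mul_of_nonneg_left _ (abs_nonneg logQ)
    have : (n:ℝ) / L ^ 2 ≤ 3 * (nh:ℝ) := by
      have : 3 * (nh:ℝ) / (m:ℝ) ≤ 3 * (nh:ℝ) := by
        rw [div_le_iff₀ (by linarith)]
        nlinarith
      linarith
    calc ((r n : ℕ):ℝ) ≤ ε₁ * ((n:ℝ) / L ^ 2) := hb1
      _ ≤ ε₁ * (3 * (nh:ℝ)) := mul_le_mul_of_nonneg_left this (le_of_lt hε₁)
  have hfinal : CC nh (r n) < δ * (nh:ℝ) := by
    have : |c| * (ε₂ * (3 * (nh:ℝ))) + |logQ| * (ε₁ * (3 * (nh:ℝ))) < δ * (nh:ℝ) := by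
      nlinarith [abs_nonneg c, abs_nonneg logQ]
    linarith
  linarith
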